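/- Let Γ = Z^k ⋊_ρ Z where ρ: Z → Aut(Z^k) = GL(k,Z). If all eigenvalues of the matrix ρ(1) have absolute value 1, then Γ is virtually nilpotent. -/

import Mathlib

open scoped commutatorElement


open Polynomial IntermediateField in
/-- Kronecker: a root of a monic integer polynomial all of whose complex roots have
absolute value 1 is a root of unity. -/
lemma aux_kronecker (p : Polynomial ℤ) (hp : p.Monic) (μ : ℂ)
    (hμ : (p.map (Int.castRingHom ℂ)).IsRoot μ)
    (hall : ∀ ν : ℂ, (p.map (Int.castRingHom ℂ)).IsRoot ν → ‖ν‖ = 1) :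
    ∃ n : ℕ, 0 < n ∧ μ ^ n = 1 := by
  have hint : IsIntegral ℤ μ := ⟨p, hp, by rwa [Polynomial.eval₂_eq_eval_map]⟩
  have halg : IsAlgebraic ℚ μ := (hint.tower_top (R := ℤ) (A := ℚ)).isAlgebraic
  have key : ∀ ν : ℂ, Polynomial.aeval ν (p.map (Int.castRingHom ℚ)) =
      Polynomial.eval ν (p.map (Int.castRingHom ℂ)) := by
    intro ν
    rw [show Int.castRingHom ℚ = algebraMap ℤ ℚ from rfl, Polynomial.aeval_map_algebraMap,
      Polynomial.aeval_def, Polynomial.eval₂_eq_eval_map,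
      show algebraMap ℤ ℂ = Int.castRingHom ℂ from rfl]
  let K : IntermediateField ℚ ℂ := ℚ⟮μ⟯
  haveI : FiniteDimensional ℚ K := IntermediateField.adjoin.finiteDimensional halg.isIntegral
  haveI : NumberField K := ⟨⟩
  let x : K := IntermediateField.AdjoinSimple.gen ℚ μ
  have hx : (algebraMap K ℂ) x = μ := rfl
  have hinj : Function.Injective (algebraMap K ℂ) := (algebraMap K ℂ).injective
  have hxint : IsIntegral ℤ x := by
    rw [← isIntegral_algebraMap_iff hinj, hx]; exact hint
  have hmin : minpoly ℚ x ∣ p.map (Int.castRingHom ℚ) := by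
    apply minpoly.dvd
    apply hinj
    rw [map_zero, ← Polynomial.aeval_algebraMap_apply, hx, key]
    exact hμ
  have hnorm : ∀ φ : K →+* ℂ, ‖φ x‖ = 1 := by
    intro φ
    have h1 : Polynomial.aeval (φ x) (minpoly ℚ x) = 0 := by
      have hcomp : φ.comp (algebraMap ℚ K) = algebraMap ℚ ℂ := by
        ext q; simp [RingHom.comp_apply, map_ratCast]
      rw [Polynomial.aeval_def, ← hcomp, ← Polynomial.hom_eval₂,
        ← Polynomial.aeval_def, minpoly.aeval, map_zero]
    have hroot : (p.map (Int.castRingHom ℂ)).IsRoot (φ x) := by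
      obtain ⟨q, hq⟩ := hmin
      have h2 : Polynomial.aeval (φ x) (p.map (Int.castRingHom ℚ)) = 0 := by
        rw [hq, map_mul, h1, zero_mul]
      rwa [key] at h2
    exact hall _ hroot
  obtain ⟨n, hn, hxn⟩ := NumberField.Embeddings.pow_eq_one_of_norm_eq_one K ℂ hxint hnorm
  exact ⟨n, hn, by rw [← hx, ← map_pow, hxn, map_one]⟩


open Polynomial in
lemma aux_unipotent {k : ℕ} (A : Matrix (Fin k) (Fin k) ℤ)
    (heig : ∀ μ : ℂ, ((A.map (Int.cast : ℤ → ℂ)).charpoly).IsRoot μ → ‖μ‖ = 1) :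
    ∃ m : ℕ, 0 < m ∧ (A ^ m - 1) ^ k = 0 := by
  classical
  set Aℂ : Matrix (Fin k) (Fin k) ℂ := A.map (Int.cast : ℤ → ℂ) with hAC
  have hchar : Aℂ.charpoly = A.charpoly.map (Int.castRingHom ℂ) := by
    rw [hAC, show (Int.cast : ℤ → ℂ) = ⇑(Int.castRingHom ℂ) from rfl]
    exact Matrix.charpoly_map A (Int.castRingHom ℂ)
  have hmono : Aℂ.charpoly.Monic := Aℂ.charpoly_monic
  have hsplits : Splits Aℂ.charpoly := IsAlgClosed.splits _
  -- each root is a root of unity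
  have hru : ∀ μ ∈ Aℂ.charpoly.roots, ∃ n : ℕ, 0 < n ∧ μ ^ n = 1 := by
    intro μ hμ
    have hroot : Aℂ.charpoly.IsRoot μ := isRoot_of_mem_roots hμ
    exact aux_kronecker A.charpoly A.charpoly_monic μ (by rwa [← hchar])
      (fun ν hν => heig ν (by rwa [hchar]))
  choose! n hn hpow using hru
  set m : ℕ := ∏ μ ∈ Aℂ.charpoly.roots.toFinset, n μ with hm
  have hmpos : 0 < m := Finset.prod_pos (fun μ hμ => hn μ (Multiset.mem_toFinset.mp hμ))
  refine ⟨m, hmpos, ?_⟩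
  -- every root μ satisfies μ ^ m = 1
  have hμm : ∀ μ ∈ Aℂ.charpoly.roots, μ ^ m = 1 := by
    intro μ hμ
    obtain ⟨c, hc⟩ := Finset.dvd_prod_of_mem n (Multiset.mem_toFinset.mpr hμ)
    rw [hm, hc, pow_mul, hpow μ hμ, one_pow]
  -- charpoly divides (X^m - 1)^k
  have hdeg : Aℂ.charpoly = (Aℂ.charpoly.roots.map (fun μ => X - C μ)).prod :=
    hsplits.eq_prod_roots_of_monic hmono
  have hdvd1 : Aℂ.charpoly ∣ ((Aℂ.charpoly.roots.dedup.map (fun μ => X - C μ)).prod) ^ k := by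
    conv_lhs => rw [hdeg]
    rw [← Multiset.prod_nsmul, ← Multiset.map_nsmul]
    apply Multiset.prod_dvd_prod_of_le
    apply Multiset.map_le_map
    rw [Multiset.le_iff_count]
    intro a
    rw [Multiset.count_nsmul, Multiset.count_dedup]
    by_cases ha : a ∈ Aℂ.charpoly.roots
    · rw [if_pos ha, mul_one]
      calc Multiset.count a Aℂ.charpoly.roots ≤ Multiset.card Aℂ.charpoly.roots :=
            Multiset.count_le_card _ _
        _ ≤ Aℂ.charpoly.natDegree := Aℂ.charpoly.card_roots'
        _ = k := by rw [Matrix.charpoly_natDegree_eq_dim, Fintype.card_fin]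
    · rw [if_neg ha, Multiset.count_eq_zero_of_notMem ha]
      exact Nat.zero_le _
  have hdvd2 : (Aℂ.charpoly.roots.dedup.map (fun μ => X - C μ)).prod ∣ (X ^ m - 1 : ℂ[X]) := by
    have hm1 : ((X : ℂ[X]) ^ m - 1).Monic := by
      have := monic_X_pow_sub_C (1 : ℂ) hmpos.ne'
      simpa using this
    have hs1 : Splits ((X : ℂ[X]) ^ m - 1) := IsAlgClosed.splits _
    rw [hs1.eq_prod_roots_of_monic hm1]
    apply Multiset.prod_dvd_prod_of_le
    apply Multiset.map_le_map
    rw [Multiset.le_iff_count]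
    intro a
    rw [Multiset.count_dedup]
    by_cases ha : a ∈ Aℂ.charpoly.roots
    · rw [if_pos ha]
      have hmem : a ∈ ((X : ℂ[X]) ^ m - 1).roots := by
        rw [mem_roots hm1.ne_zero]
        simp [IsRoot, hμm a ha]
      exact Multiset.count_pos.mpr hmem
    · rw [if_neg ha]
      exact Nat.zero_le _
  have hdvd : Aℂ.charpoly ∣ ((X : ℂ[X]) ^ m - 1) ^ k :=
    hdvd1.trans (pow_dvd_pow_of_dvd hdvd2 k)
  -- Cayley–Hamilton
  have haeval : Polynomial.aeval Aℂ (((X : ℂ[X]) ^ m - 1) ^ k) = 0 := by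
    obtain ⟨q, hq⟩ := hdvd
    rw [hq, map_mul, Matrix.aeval_self_charpoly, zero_mul]
  have hC : (Aℂ ^ m - 1) ^ k = 0 := by
    simpa using haeval
  -- transfer back to ℤ
  have hinj : Function.Injective ((Int.castRingHom ℂ).mapMatrix :
      Matrix (Fin k) (Fin k) ℤ →+* Matrix (Fin k) (Fin k) ℂ) := by
    intro X Y hXY
    ext i j
    have h2 : ((Int.castRingHom ℂ).mapMatrix X) i j = ((Int.castRingHom ℂ).mapMatrix Y) i j := by
      rw [hXY]
    simp only [RingHom.mapMatrix_apply, Matrix.map_apply] at h2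
    exact Int.cast_injective h2
  apply hinj
  rw [map_pow, map_sub, map_pow, map_one, map_zero]
  exact hC


/-- If `⁅x, y⁆ ∈ K` for all generators `x`, then for all elements of the closure. -/
lemma aux_comm_left {G : Type*} [Group G] (K : Subgroup G) (hK : K.Normal) (s : Set G) (y : G)
    (h : ∀ x ∈ s, ⁅x, y⁆ ∈ K) : ∀ x ∈ Subgroup.closure s, ⁅x, y⁆ ∈ K := by
  let T : Subgroup G :=
    { carrier := {x | ⁅x, y⁆ ∈ K}
      one_mem' := by
        have : ⁅(1 : G), y⁆ = 1 := by simp only [commutatorElement_def]; group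
        simp only [Set.mem_setOf_eq, this]; exact K.one_mem
      mul_mem' := by
        intro a b ha hb
        simp only [Set.mem_setOf_eq] at *
        have : ⁅a * b, y⁆ = a * ⁅b, y⁆ * a⁻¹ * ⁅a, y⁆ := by
          simp only [commutatorElement_def]; group
        rw [this]
        exact mul_mem (hK.conj_mem _ hb a) ha
      inv_mem' := by
        intro a ha
        simp only [Set.mem_setOf_eq] at *
        have : ⁅a⁻¹, y⁆ = a⁻¹ * ⁅a, y⁆⁻¹ * (a⁻¹)⁻¹ := by
          simp only [commutatorElement_def]; group
        rw [this]
        exact hK.conj_mem _ (inv_mem ha) a⁻¹ }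
  intro x hx
  exact (Subgroup.closure_le T).mpr h hx

lemma aux_comm_right {G : Type*} [Group G] (K : Subgroup G) (hK : K.Normal) (s : Set G) (x : G)
    (h : ∀ y ∈ s, ⁅x, y⁆ ∈ K) : ∀ y ∈ Subgroup.closure s, ⁅x, y⁆ ∈ K := by
  let T : Subgroup G :=
    { carrier := {y | ⁅x, y⁆ ∈ K}
      one_mem' := by
        have : ⁅x, (1 : G)⁆ = 1 := by simp only [commutatorElement_def]; group
        simp only [Set.mem_setOf_eq, this]; exact K.one_mem
      mul_mem' := by
        intro a b ha hb
        simp only [Set.mem_setOf_eq] at *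
        have : ⁅x, a * b⁆ = ⁅x, a⁆ * (a * ⁅x, b⁆ * a⁻¹) := by
          simp only [commutatorElement_def]; group
        rw [this]
        exact mul_mem ha (hK.conj_mem _ hb a)
      inv_mem' := by
        intro a ha
        simp only [Set.mem_setOf_eq] at *
        have : ⁅x, a⁻¹⁆ = a⁻¹ * ⁅x, a⁆⁻¹ * (a⁻¹)⁻¹ := by
          simp only [commutatorElement_def]; group
        rw [this]
        exact hK.conj_mem _ (inv_mem ha) a⁻¹ }
  intro y hy
  exact (Subgroup.closure_le T).mpr h hy

/-- Let `Γ = Z^k ⋊_ρ Z`, presented as a group with a normal subgroup `N ≅ ℤ^k` and an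
element `t` such that `N` and `t` generate `Γ`, `Γ/N` is generated by the image of `t`
freely (`t^j ∈ N` only for `j = 0`), and conjugation by `t` acts on `N ≅ ℤ^k` as a
matrix `A ∈ GL(k,ℤ)`. If all complex eigenvalues of `A` have absolute value `1`,
then `Γ` is virtually nilpotent. -/
theorem virtually_nilpotent_of_unit_eigenvalues {Γ : Type*} [Group Γ] (k : ℕ)
    (N : Subgroup Γ) (hN : N.Normal)
    (e : N ≃* Multiplicative (Fin k → ℤ)) (t : Γ)
    (hgen : Subgroup.closure ((N : Set Γ) ∪ {t}) = ⊤)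
    (hfree : ∀ j : ℤ, t ^ j ∈ N → j = 0)
    (A : Matrix (Fin k) (Fin k) ℤ) (hA : IsUnit A.det)
    (hconj : ∀ n : N,
      e ⟨t * (n : Γ) * t⁻¹, hN.conj_mem (n : Γ) n.2 t⟩ =
        Multiplicative.ofAdd (A.mulVec (Multiplicative.toAdd (e n))))
    (heig : ∀ μ : ℂ, ((A.map (Int.cast : ℤ → ℂ)).charpoly).IsRoot μ → ‖μ‖ = 1) :
    ∃ H : Subgroup Γ, H.FiniteIndex ∧ Group.IsNilpotent H := by
  classical
  obtain ⟨m, hm, hBk⟩ := aux_unipotent A heig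
  set B : Matrix (Fin k) (Fin k) ℤ := A ^ m - 1 with hBdef
  obtain ⟨uA, huA⟩ := (Matrix.isUnit_iff_isUnit_det A).mpr hA
  set C : Matrix (Fin k) (Fin k) ℤ := ↑uA⁻¹ with hCdef
  have hCA : C * A = 1 := by rw [hCdef, ← huA]; exact uA.inv_mul
  have hAC : A * C = 1 := by rw [hCdef, ← huA]; exact uA.mul_inv
  have hcommAB : Commute A B :=
    ((Commute.refl A).pow_right m).sub_right (Commute.one_right A)
  have hcommCA : Commute C A := by
    unfold Commute SemiconjBy
    rw [hCA, hAC]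
  have hcommCB : Commute C B :=
    (hcommCA.pow_right m).sub_right (Commute.one_right C)
  -- the coordinate function
  set w : N → (Fin k → ℤ) := fun n => Multiplicative.toAdd (e n) with hwdef
  have hw_mul : ∀ (a b : Γ) (ha : a ∈ N) (hb : b ∈ N) (hab : a * b ∈ N),
      w ⟨a * b, hab⟩ = w ⟨a, ha⟩ + w ⟨b, hb⟩ := by
    intro a b ha hb hab
    show Multiplicative.toAdd (e (⟨a, ha⟩ * ⟨b, hb⟩)) = _
    rw [map_mul]
    rfl
  have hw_inv : ∀ (a : Γ) (ha : a ∈ N) (ha' : a⁻¹ ∈ N),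
      w ⟨a⁻¹, ha'⟩ = - w ⟨a, ha⟩ := by
    intro a ha ha'
    show Multiplicative.toAdd (e (⟨a, ha⟩⁻¹)) = _
    rw [map_inv]
    rfl
  have hw_one : ∀ (h : (1 : Γ) ∈ N), w ⟨1, h⟩ = 0 := by
    intro h
    show Multiplicative.toAdd (e 1) = 0
    rw [map_one]
    rfl
  have hw_zero : ∀ (a : Γ) (ha : a ∈ N), w ⟨a, ha⟩ = 0 → a = 1 := by
    intro a ha h
    have h1 : e ⟨a, ha⟩ = 1 := by
      have := congrArg Multiplicative.ofAdd h
      simpa [hwdef] using this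
    have h2 : (⟨a, ha⟩ : N) = 1 := e.injective (by rw [h1, map_one])
    exact congrArg Subtype.val h2
  -- conjugation formulas
  have hconj' : ∀ (a : Γ) (ha : a ∈ N) (h : t * a * t⁻¹ ∈ N),
      w ⟨t * a * t⁻¹, h⟩ = A.mulVec (w ⟨a, ha⟩) := by
    intro a ha h
    exact congrArg Multiplicative.toAdd (hconj ⟨a, ha⟩)
  have hconjinv : ∀ (a : Γ) (ha : a ∈ N) (h : t⁻¹ * a * t ∈ N),
      w ⟨t⁻¹ * a * t, h⟩ = C.mulVec (w ⟨a, ha⟩) := by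
    intro a ha h
    have key : t * (t⁻¹ * a * t) * t⁻¹ = a := by group
    have hmem3 : t * (t⁻¹ * a * t) * t⁻¹ ∈ N := by rw [key]; exact ha
    have h2 := hconj' (t⁻¹ * a * t) h hmem3
    have h6 : (⟨a, ha⟩ : N) = ⟨t * (t⁻¹ * a * t) * t⁻¹, hmem3⟩ := Subtype.ext key.symm
    rw [h6, h2, Matrix.mulVec_mulVec, hCA, Matrix.one_mulVec]
  have hconjpow : ∀ (i : ℕ) (a : Γ) (ha : a ∈ N) (h : t ^ i * a * (t ^ i)⁻¹ ∈ N),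
      w ⟨t ^ i * a * (t ^ i)⁻¹, h⟩ = (A ^ i).mulVec (w ⟨a, ha⟩) := by
    intro i
    induction i with
    | zero =>
      intro a ha h
      have key : t ^ 0 * a * (t ^ 0)⁻¹ = a := by group
      rw [show (⟨t ^ 0 * a * (t ^ 0)⁻¹, h⟩ : N) = ⟨a, ha⟩ from Subtype.ext key,
        pow_zero, Matrix.one_mulVec]
    | succ i ih =>
      intro a ha h
      have hb : t ^ i * a * (t ^ i)⁻¹ ∈ N := hN.conj_mem a ha (t ^ i)
      have key : t ^ (i + 1) * a * (t ^ (i + 1))⁻¹ = t * (t ^ i * a * (t ^ i)⁻¹) * t⁻¹ := by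
        rw [pow_succ' t i]; group
      have hmem : t * (t ^ i * a * (t ^ i)⁻¹) * t⁻¹ ∈ N := hN.conj_mem _ hb t
      rw [show (⟨t ^ (i + 1) * a * (t ^ (i + 1))⁻¹, h⟩ : N)
          = ⟨t * (t ^ i * a * (t ^ i)⁻¹) * t⁻¹, hmem⟩ from Subtype.ext key,
        hconj' _ hb, ih a ha hb, Matrix.mulVec_mulVec, ← pow_succ']
  -- elements of N commute
  have hNcomm : ∀ (a b : Γ), a ∈ N → b ∈ N → a * b = b * a := by
    intro a b ha hb
    have h1 : (⟨a, ha⟩ : N) * ⟨b, hb⟩ = ⟨b, hb⟩ * ⟨a, ha⟩ :=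
      e.injective (by rw [map_mul, map_mul, mul_comm])
    exact congrArg Subtype.val h1
  -- the subgroups M j
  let M : ℕ → Subgroup Γ := fun j =>
    { carrier := {γ | ∃ h : γ ∈ N, ∃ u, w ⟨γ, h⟩ = (B ^ j).mulVec u}
      one_mem' := ⟨N.one_mem, 0, by rw [hw_one, Matrix.mulVec_zero]⟩
      mul_mem' := by
        rintro a b ⟨ha, u, hu⟩ ⟨hb, v, hv⟩
        exact ⟨mul_mem ha hb, u + v, by
          rw [hw_mul a b ha hb (mul_mem ha hb), hu, hv, Matrix.mulVec_add]⟩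
      inv_mem' := by
        rintro a ⟨ha, u, hu⟩
        exact ⟨inv_mem ha, -u, by
          rw [hw_inv a ha (inv_mem ha), hu, Matrix.mulVec_neg]⟩ }
  have hMN : ∀ j, M j ≤ N := fun j γ hγ => hγ.1
  -- M j is normal in Γ
  have hMnormal : ∀ j, (M j).Normal := by
    intro j
    rw [← Subgroup.normalizer_eq_top_iff, eq_top_iff, ← hgen, Subgroup.closure_le]
    rintro g (hg | hg)
    · -- g ∈ N
      rw [SetLike.mem_coe, Subgroup.mem_normalizer_iff]
      intro y
      constructor
      · intro hy
        have heq : g * y * g⁻¹ = y := by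
          rw [hNcomm g y hg (hMN j hy)]; group
        rwa [heq]
      · intro hz
        have hyN : y ∈ N := by
          have h2 : g⁻¹ * (g * y * g⁻¹) * (g⁻¹)⁻¹ = y := by group
          rw [← h2]
          exact hN.conj_mem _ (hMN j hz) g⁻¹
        have heq : g * y * g⁻¹ = y := by
          rw [hNcomm g y hg hyN]; group
        rwa [heq] at hz
    · -- g = t
      rw [Set.mem_singleton_iff] at hg
      rw [SetLike.mem_coe, hg, Subgroup.mem_normalizer_iff]
      intro y
      constructor
      · rintro ⟨hy, u, hu⟩
        refine ⟨hN.conj_mem y hy t, A.mulVec u, ?_⟩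
        rw [hconj' y hy, hu, Matrix.mulVec_mulVec, Matrix.mulVec_mulVec,
          (hcommAB.pow_right j).eq]
      · rintro ⟨hz, u, hu⟩
        have hyN : y ∈ N := by
          have h2 : t⁻¹ * (t * y * t⁻¹) * t = y := by group
          rw [← h2]
          have := hN.conj_mem _ hz t⁻¹
          simpa using this
        refine ⟨hyN, C.mulVec u, ?_⟩
        have h5 : t⁻¹ * (t * y * t⁻¹) * t = y := by group
        have hmem4 : t⁻¹ * (t * y * t⁻¹) * t ∈ N := by rw [h5]; exact hyN
        have h4 := hconjinv (t * y * t⁻¹) hz hmem4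
        have h6 : (⟨y, hyN⟩ : N) = ⟨t⁻¹ * (t * y * t⁻¹) * t, hmem4⟩ := Subtype.ext h5.symm
        rw [h6, h4, hu, Matrix.mulVec_mulVec, Matrix.mulVec_mulVec,
          (hcommCB.pow_right j).eq]
  -- the finite-index subgroup
  set H' : Subgroup Γ := Subgroup.closure ((N : Set Γ) ∪ {t ^ m}) with hH'def
  have htmH : t ^ m ∈ H' := Subgroup.subset_closure (Or.inr rfl)
  have hNH : ∀ a : Γ, a ∈ N → a ∈ H' := fun a ha => Subgroup.subset_closure (Or.inl ha)
  -- key commutator computation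
  have hcomm : ∀ (i : ℕ) (y : Γ), y ∈ M i → ∀ x ∈ H', ⁅x, y⁆ ∈ M (i + 1) := by
    intro i y hy
    apply aux_comm_left (M (i + 1)) (hMnormal (i + 1))
    rintro x (hx | hx)
    · -- x ∈ N : x and y commute
      have hyN : y ∈ N := hMN i hy
      have h1 : ⁅x, y⁆ = 1 := by
        rw [commutatorElement_def, hNcomm x y hx hyN]; group
      rw [h1]; exact (M (i + 1)).one_mem
    · rw [Set.mem_singleton_iff] at hx
      rw [hx]
      obtain ⟨hyN, u, hu⟩ := hy
      have hz : t ^ m * y * (t ^ m)⁻¹ ∈ N := hN.conj_mem y hyN (t ^ m)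
      have hmem : t ^ m * y * (t ^ m)⁻¹ * y⁻¹ ∈ N := mul_mem hz (inv_mem hyN)
      have hcalc : w ⟨t ^ m * y * (t ^ m)⁻¹ * y⁻¹, hmem⟩ = (B ^ (i + 1)).mulVec u := by
        rw [hw_mul _ _ hz (inv_mem hyN) hmem, hconjpow m y hyN hz,
          hw_inv y hyN (inv_mem hyN), hu, Matrix.mulVec_mulVec, ← sub_eq_add_neg,
          ← Matrix.sub_mulVec]
        rw [pow_succ' B i, hBdef, sub_mul, one_mul]
      exact ⟨hmem, u, hcalc⟩
  have hR : ∀ x ∈ H', ⁅x, t ^ m⁆ ∈ M 1 := by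
    apply aux_comm_left (M 1) (hMnormal 1)
    rintro x (hx | hx)
    · -- x ∈ N
      have hx0 : x ∈ M 0 := ⟨hx, w ⟨x, hx⟩, by rw [pow_zero, Matrix.one_mulVec]⟩
      have h1 : ⁅t ^ m, x⁆ ∈ M 1 := hcomm 0 x hx0 (t ^ m) htmH
      have h2 : ⁅x, t ^ m⁆ = ⁅t ^ m, x⁆⁻¹ := by
        simp only [commutatorElement_def]; group
      rw [h2]; exact inv_mem h1
    · rw [Set.mem_singleton_iff] at hx
      rw [hx, show ⁅t ^ m, t ^ m⁆ = (1 : Γ) from by simp only [commutatorElement_def]; group]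
      exact (M 1).one_mem
  -- commutator subgroup of H' lands in M 1
  have hbase : ∀ x ∈ H', ∀ y ∈ H', ⁅x, y⁆ ∈ M 1 := by
    intro x hx
    apply aux_comm_right (M 1) (hMnormal 1)
    rintro y (hy | hy)
    · -- y ∈ N
      have hy0 : y ∈ M 0 := ⟨hy, w ⟨y, hy⟩, by rw [pow_zero, Matrix.one_mulVec]⟩
      exact hcomm 0 y hy0 x hx
    · rw [Set.mem_singleton_iff] at hy
      rw [hy]
      exact hR x hx
  have hstep : ∀ (i : ℕ) (K : Subgroup Γ), K ≤ M i → ⁅K, H'⁆ ≤ M (i + 1) := by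
    intro i K hK
    rw [Subgroup.commutator_le]
    intro g₁ hg₁ g₂ hg₂
    have h2 : ⁅g₂, g₁⁆ ∈ M (i + 1) := hcomm i g₁ (hK hg₁) g₂ hg₂
    have h3 : ⁅g₁, g₂⁆ = ⁅g₂, g₁⁆⁻¹ := by
      simp only [commutatorElement_def]; group
    rw [h3]
    exact inv_mem h2
  have hmaptop : Subgroup.map H'.subtype ⊤ = H' := by
    rw [← MonoidHom.range_eq_map, Subgroup.range_subtype]
  have hLM : ∀ i : ℕ, Subgroup.map H'.subtype (lowerCentralSeries (⊤ : Subgroup ↥H') (i + 1)) ≤ M (i + 1) := by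
    intro i
    induction i with
    | zero =>
      have h1 : lowerCentralSeries (⊤ : Subgroup ↥H') 1 = ⁅(⊤ : Subgroup ↥H'), ⊤⁆ := rfl
      rw [h1, Subgroup.map_commutator, hmaptop, Subgroup.commutator_le]
      exact hbase
    | succ i ih =>
      have h1 : lowerCentralSeries (⊤ : Subgroup ↥H') (i + 2) = ⁅lowerCentralSeries (⊤ : Subgroup ↥H') (i + 1), ⊤⁆ := rfl
      rw [h1, Subgroup.map_commutator, hmaptop]
      exact hstep (i + 1) _ ih
  have hMbot : M (k + 1) ≤ ⊥ := by
    rintro γ ⟨hγ, u, hu⟩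
    rw [Subgroup.mem_bot]
    apply hw_zero γ hγ
    rw [hu, show B ^ (k + 1) = 0 from by rw [pow_succ, hBk, zero_mul], Matrix.zero_mulVec]
  have hlcs : lowerCentralSeries (⊤ : Subgroup ↥H') (k + 1) = ⊥ := by
    rw [eq_bot_iff]
    intro x hx
    have h1 : H'.subtype x ∈ M (k + 1) := hLM k (Subgroup.mem_map.mpr ⟨x, hx, rfl⟩)
    have hx1 : (x : Γ) = 1 := Subgroup.mem_bot.mp (hMbot h1)
    rw [Subgroup.mem_bot]
    exact Subtype.ext hx1
  have hnil : Group.IsNilpotent ↥H' := nilpotent_iff_lowerCentralSeries.mpr ⟨k + 1, hlcs⟩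
  -- finite index
  have hexists : ∀ γ : Γ, ∃ j : ℤ, γ * (t ^ j)⁻¹ ∈ N := by
    let S : Subgroup Γ :=
      { carrier := {γ | ∃ j : ℤ, γ * (t ^ j)⁻¹ ∈ N}
        one_mem' := ⟨0, by simpa using N.one_mem⟩
        mul_mem' := by
          rintro a b ⟨j₁, h₁⟩ ⟨j₂, h₂⟩
          refine ⟨j₁ + j₂, ?_⟩
          have key : a * b * (t ^ (j₁ + j₂))⁻¹
              = a * (t ^ j₁)⁻¹ * (t ^ j₁ * (b * (t ^ j₂)⁻¹) * (t ^ j₁)⁻¹) := by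
            rw [zpow_add]; group
          rw [key]
          exact mul_mem h₁ (hN.conj_mem _ h₂ (t ^ j₁))
        inv_mem' := by
          rintro a ⟨j, h⟩
          refine ⟨-j, ?_⟩
          have key : a⁻¹ * (t ^ (-j))⁻¹ = (t ^ j)⁻¹ * (a * (t ^ j)⁻¹)⁻¹ * ((t ^ j)⁻¹)⁻¹ := by
            rw [zpow_neg]; group
          rw [key]
          exact hN.conj_mem _ (inv_mem h) (t ^ j)⁻¹ }
    have htop : (⊤ : Subgroup Γ) ≤ S := by
      rw [← hgen, Subgroup.closure_le]
      rintro x (hx | hx)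
      · exact ⟨0, by simpa using hx⟩
      · rw [Set.mem_singleton_iff] at hx
        exact ⟨1, by rw [hx]; simpa using N.one_mem⟩
    exact fun γ => htop (Subgroup.mem_top γ)
  choose f hf using hexists
  have huniq : ∀ (γ : Γ) (j : ℤ), γ * (t ^ j)⁻¹ ∈ N → j = f γ := by
    intro γ j hj
    have key : t ^ (j - f γ) = (γ * (t ^ j)⁻¹)⁻¹ * (γ * (t ^ (f γ))⁻¹) := by
      rw [zpow_sub]; group
    have h2 : t ^ (j - f γ) ∈ N := by
      rw [key]; exact mul_mem (inv_mem hj) (hf γ)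
    have := hfree _ h2
    omega
  have hfmul : ∀ a b : Γ, f (a * b) = f a + f b := by
    intro a b
    have key : a * b * (t ^ (f a + f b))⁻¹
        = a * (t ^ (f a))⁻¹ * (t ^ (f a) * (b * (t ^ (f b))⁻¹) * (t ^ (f a))⁻¹) := by
      rw [zpow_add]; group
    have hmem : a * b * (t ^ (f a + f b))⁻¹ ∈ N := by
      rw [key]; exact mul_mem (hf a) (hN.conj_mem _ (hf b) _)
    exact (huniq _ _ hmem).symm
  haveI : NeZero m := ⟨hm.ne'⟩
  let g : Γ →* Multiplicative (ZMod m) :=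
    MonoidHom.mk' (fun γ => Multiplicative.ofAdd ((f γ : ZMod m))) (by
      intro a b
      show Multiplicative.ofAdd ((f (a * b) : ZMod m))
        = Multiplicative.ofAdd ((f a : ZMod m)) * Multiplicative.ofAdd ((f b : ZMod m))
      rw [hfmul a b]
      push_cast
      rw [ofAdd_add])
  have hker : g.ker ≤ H' := by
    intro γ hγ
    have h0 : ((f γ : ZMod m)) = 0 := by
      have h1 : g γ = 1 := hγ
      have h2 : Multiplicative.ofAdd ((f γ : ZMod m)) = 1 := h1
      simpa using h2
    obtain ⟨j, hj⟩ := (ZMod.intCast_zmod_eq_zero_iff_dvd (f γ) m).mp h0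
    have hsplit : γ = γ * (t ^ (f γ))⁻¹ * ((t ^ m : Γ) ^ j) := by
      have h3 : ((t ^ m : Γ) ^ j) = t ^ (f γ) := by
        rw [← zpow_natCast t m, ← zpow_mul, ← hj]
      rw [h3]; group
    rw [hsplit]
    exact mul_mem (hNH _ (hf γ)) (zpow_mem htmH j)
  haveI : g.ker.FiniteIndex := Subgroup.finiteIndex_ker g
  exact ⟨H', Subgroup.finiteIndex_of_le hker, hnil⟩
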